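/- (Lemma 1) Suppose that no dessin D ∈ 𝒟 is its own descendant, where D₁ is called a son ('fils') of D if D₁ ≠ D and ∂_{T(D)} ∂_{S(D₁)} Δ_μ is a nonzero constant, and 'descendant' is the transitive closure of the son relation. Then the family {∂_{S(D)} Δ_μ : D ∈ 𝒟} is linearly independent over ℚ. -/

import Mathlib

open MvPolynomial

noncomputable section

/-- Partial derivatives with respect to two variables commute. -/
lemma pderiv_pderiv_comm {σ : Type*} (i j : σ) (f : MvPolynomial σ ℚ) :
    pderiv i (pderiv j f) = pderiv j (pderiv i f) := by
  classical
  rcases eq_or_ne i j with rfl | hij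
  · rfl
  · induction f using MvPolynomial.induction_on' with
    | monomial s a =>
      simp only [pderiv_monomial, Finsupp.coe_tsub, Pi.sub_apply, Finsupp.single_apply,
        if_neg hij, if_neg (Ne.symm hij), Nat.sub_zero]
      rw [tsub_tsub, tsub_tsub, add_comm, mul_right_comm]
    | add p q hp hq => simp [hp, hq]

lemma pderiv_commute {σ : Type*} (i j : σ) :
    Commute ((pderiv i).toLinearMap : Module.End ℚ (MvPolynomial σ ℚ))
      (pderiv j).toLinearMap := by
  apply LinearMap.ext
  intro f
  simpa only [Module.End.mul_apply, Derivation.coeFn_coe] using pderiv_pderiv_comm i j f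

/-- The monomial differential operator `∂^d = ∏ᵢ (∂/∂zᵢ)^(dᵢ)`. -/
def Dmon {σ : Type*} [DecidableEq σ] (d : σ →₀ ℕ) :
    Module.End ℚ (MvPolynomial σ ℚ) :=
  d.support.noncommProd
    (fun i => ((pderiv i).toLinearMap : Module.End ℚ (MvPolynomial σ ℚ)) ^ d i)
    fun i _ j _ _ => Commute.pow_pow (pderiv_commute i j) _ _

/-- `P(∂) Q` : the differential operator associated with `P` (substituting `∂/∂zᵢ`
for each variable `zᵢ`) applied to `Q`. -/
def DP {σ : Type*} [DecidableEq σ] (P Q : MvPolynomial σ ℚ) : MvPolynomial σ ℚ :=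
  ∑ d ∈ P.support, P.coeff d • Dmon d Q

/-- `x`-exponents of the biexponents of the hook `(K+1,1^L)`, listed in lexicographic
order: `(0,0),(0,1),…,(0,K),(1,0),(2,0),…,(L,0)`. -/
def hookP (K L : ℕ) (j : Fin (K + L + 1)) : ℕ :=
  if (j : ℕ) ≤ K then 0 else (j : ℕ) - K

/-- `y`-exponents of the biexponents of the hook `(K+1,1^L)`. -/
def hookQ (K L : ℕ) (j : Fin (K + L + 1)) : ℕ :=
  if (j : ℕ) ≤ K then (j : ℕ) else 0

/-- `Δ_μ = det (xᵢ^(p_j) yᵢ^(q_j))` for the hook `μ = (K+1,1^L)` of `n = K+L+1`;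
the variable `Sum.inl i` is `xᵢ` and `Sum.inr i` is `yᵢ`. -/
def Delta (K L : ℕ) : MvPolynomial (Fin (K + L + 1) ⊕ Fin (K + L + 1)) ℚ :=
  Matrix.det fun i j =>
    X (Sum.inl i) ^ hookP K L j * X (Sum.inr i) ^ hookQ K L j


/-- The size (height for a `y`-column, depth for an `x`-column) of the column at
place `i` of a dessin with column types `isY` : the `j`-th `y`-column from the left
has height `K+1-j`, and the `j`-th `x`-column from the left has depth `L+1-j`. -/
def colSize (K L : ℕ) (isY : Fin (K + L) → Bool) (i : Fin (K + L)) : ℕ :=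
  if isY i then K - (Finset.univ.filter fun j => j < i ∧ isY j = true).card
  else L - (Finset.univ.filter fun j => j < i ∧ isY j = false).card

/-- A column is plain ('unie') if it contains only crosses or only blank cells. -/
def Plain (K L : ℕ) (isY : Fin (K + L) → Bool) (cross : Fin (K + L) → ℕ)
    (j : Fin (K + L)) : Prop :=
  cross j = 0 ∨ cross j = colSize K L isY j

/-- A dessin attached to the hook `μ = (K+1,1^L)` : at each of the `K+L` places there
is a `y`-column (`isY i = true`) or an `x`-column (`isY i = false`), with `K` many
`y`-columns; the column at place `i` carries `cross i` crosses, at most its size; and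
for each `y`-column, the leftmost plain `x`-column to its right (if any) dictates:
if it has no crosses the `y`-column has at least one cross, and if it is full of
crosses the `y`-column has at least one blank cell. -/
structure Dessin (K L : ℕ) where
  isY : Fin (K + L) → Bool
  cross : Fin (K + L) → ℕ
  card_isY : (Finset.univ.filter fun i => isY i = true).card = K
  cross_le : ∀ i, cross i ≤ colSize K L isY i
  rule : ∀ i j : Fin (K + L), isY i = true → isY j = false → i < j →
    Plain K L isY cross j →
    (∀ j', i < j' → j' < j → isY j' = false → ¬ Plain K L isY cross j') →
    ((cross j = 0 → 1 ≤ cross i) ∧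
     (cross j = colSize K L isY j → cross i < colSize K L isY i))

/-- The exponent of the derivation operator `∂_D = ∂_{S(D)}` attached to a dessin:
for each cross at place `i`, derive once with respect to `xᵢ` or `yᵢ` according to
the type of the column at place `i`. -/
def Dessin.exp {K L : ℕ} (D : Dessin K L) :
    (Fin (K + L + 1) ⊕ Fin (K + L + 1)) →₀ ℕ :=
  Finsupp.equivFunOnFinite.symm <| Sum.elim
    (fun i : Fin (K + L + 1) => if h : (i : ℕ) < K + L then
      (if D.isY ⟨i, h⟩ then 0 else D.cross ⟨i, h⟩) else 0)
    (fun i : Fin (K + L + 1) => if h : (i : ℕ) < K + L then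
      (if D.isY ⟨i, h⟩ then D.cross ⟨i, h⟩ else 0) else 0)

/-- The exponent of the derivation operator `∂_{T(D)}` attached to the blank cells of
a dessin: for each blank cell at place `i`, derive once with respect to `xᵢ` or `yᵢ`
according to the type of the column at place `i`. -/
def Dessin.blankExp {K L : ℕ} (D : Dessin K L) :
    (Fin (K + L + 1) ⊕ Fin (K + L + 1)) →₀ ℕ :=
  Finsupp.equivFunOnFinite.symm <| Sum.elim
    (fun i : Fin (K + L + 1) => if h : (i : ℕ) < K + L then
      (if D.isY ⟨i, h⟩ then 0 else colSize K L D.isY ⟨i, h⟩ - D.cross ⟨i, h⟩) else 0)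
    (fun i : Fin (K + L + 1) => if h : (i : ℕ) < K + L then
      (if D.isY ⟨i, h⟩ then colSize K L D.isY ⟨i, h⟩ - D.cross ⟨i, h⟩ else 0) else 0)

/-- `D₁` is a son ('fils') of `D` if `D₁ ≠ D` and `∂_{T(D)} ∂_{S(D₁)} Δ_μ` is a
nonzero constant. -/
def Son (K L : ℕ) (D D₁ : Dessin K L) : Prop :=
  D₁ ≠ D ∧ ∃ c : ℚ, c ≠ 0 ∧ Dmon D.blankExp (Dmon D₁.exp (Delta K L)) = C c


/-! ### Auxiliary development -/

namespace Aval

open Finsupp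

variable {σ : Type*} [DecidableEq σ]

lemma pderiv_pow_monomial (i : σ) (k : ℕ) (m : σ →₀ ℕ) (c : ℚ) :
    (((pderiv i).toLinearMap : Module.End ℚ (MvPolynomial σ ℚ)) ^ k) (monomial m c)
      = monomial (m - Finsupp.single i k) (c * (m i).descFactorial k) := by
  induction k with
  | zero => simp
  | succ k ih =>
    rw [pow_succ', Module.End.mul_apply, ih]
    show pderiv i _ = _
    rw [pderiv_monomial, tsub_tsub, ← Finsupp.single_add, Finsupp.tsub_apply,
      Finsupp.single_eq_same, Nat.descFactorial_succ, Nat.cast_mul]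
    ring

lemma noncommProd_pderiv_monomial (s : Finset σ) (d : σ → ℕ)
    (hc : (s : Set σ).Pairwise fun a b => Commute
      (((pderiv a).toLinearMap : Module.End ℚ (MvPolynomial σ ℚ)) ^ d a)
      (((pderiv b).toLinearMap : Module.End ℚ (MvPolynomial σ ℚ)) ^ d b))
    (m : σ →₀ ℕ) (c : ℚ) :
    (s.noncommProd (fun i => ((pderiv i).toLinearMap : Module.End ℚ (MvPolynomial σ ℚ)) ^ d i) hc)
        (monomial m c)
      = monomial (m - ∑ i ∈ s, Finsupp.single i (d i))
          (c * ∏ i ∈ s, (m i).descFactorial (d i)) := by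
  classical
  induction s using Finset.cons_induction with
  | empty => simp
  | cons a s ha ih =>
    rw [Finset.noncommProd_cons, Module.End.mul_apply,
      ih (hc.mono (by simp [Finset.subset_iff]))]
    rw [pderiv_pow_monomial, tsub_tsub]
    have hap : (m - ∑ i ∈ s, Finsupp.single i (d i)) a = m a := by
      rw [Finsupp.tsub_apply]
      have : (∑ i ∈ s, Finsupp.single i (d i)) a = 0 := by
        rw [Finset.sum_apply']
        exact Finset.sum_eq_zero fun i hi =>
          Finsupp.single_eq_of_ne (fun h => ha (h ▸ hi))
      omega
    rw [hap, Finset.sum_cons, Finset.prod_cons, add_comm (Finsupp.single a (d a))]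
    push_cast
    ring

lemma Dmon_monomial (d m : σ →₀ ℕ) (c : ℚ) :
    Dmon d (monomial m c)
      = monomial (m - d) (c * ∏ i ∈ d.support, (m i).descFactorial (d i)) := by
  have key := noncommProd_pderiv_monomial d.support (⇑d)
    (fun i _ j _ _ => Commute.pow_pow (pderiv_commute i j) _ _) m c
  have hs : (∑ i ∈ d.support, Finsupp.single i (d i)) = d := Finsupp.sum_single d
  rw [hs] at key
  exact key

lemma le_of_prodDesc_ne_zero {d m : σ →₀ ℕ}
    (h : (∏ i ∈ d.support, (m i).descFactorial (d i)) ≠ 0) : d ≤ m := by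
  rw [Finsupp.le_iff]
  intro i hi
  have := Finset.prod_ne_zero_iff.mp h i hi
  by_contra hlt
  exact this (Nat.descFactorial_eq_zero_iff_lt.mpr (by omega))

lemma prodDesc_ne_zero_of_le {d m : σ →₀ ℕ} (h : d ≤ m) :
    (∏ i ∈ d.support, (m i).descFactorial (d i)) ≠ 0 := by
  rw [Finset.prod_ne_zero_iff]
  intro i _
  rw [Ne, Nat.descFactorial_eq_zero_iff_lt, not_lt]
  exact Finsupp.le_def.mp h i

/-- total degree of a finitely supported exponent over a fintype -/
lemma sum_eq_sum_univ [Fintype σ] (m : σ →₀ ℕ) :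
    m.sum (fun _ k => k) = ∑ i, m i :=
  Finsupp.sum_fintype _ _ (fun _ => rfl)

lemma eq_of_le_of_sum_eq [Fintype σ] {d m : σ →₀ ℕ} (hle : d ≤ m)
    (hsum : m.sum (fun _ k => k) = d.sum (fun _ k => k)) : m = d := by
  rw [sum_eq_sum_univ, sum_eq_sum_univ] at hsum
  ext a
  by_contra hne
  have h1 : ∀ i ∈ Finset.univ, d i ≤ m i := fun i _ => Finsupp.le_def.mp hle i
  have h2 : d a < m a := lt_of_le_of_ne (Finsupp.le_def.mp hle a) (Ne.symm hne)
  exact absurd hsum (ne_of_gt (Finset.sum_lt_sum h1 ⟨a, Finset.mem_univ a, h2⟩))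

lemma add_le_of_le_tsub {d e m : σ →₀ ℕ} (h1 : d ≤ m) (h2 : e ≤ m - d) :
    d + e ≤ m := by
  rw [Finsupp.le_def]
  intro a
  have := Finsupp.le_def.mp h1 a
  have := Finsupp.le_def.mp h2 a
  rw [Finsupp.tsub_apply] at this
  rw [Finsupp.add_apply]
  omega

end Aval

namespace Aval

open Finsupp Equiv

variable (K L : ℕ)

/-- Package a pair of functions as a finitely supported exponent on `Fin n ⊕ Fin n`. -/
def pairFun (f g : Fin (K + L + 1) → ℕ) : (Fin (K + L + 1) ⊕ Fin (K + L + 1)) →₀ ℕ :=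
  Finsupp.equivFunOnFinite.symm (Sum.elim f g)

@[simp] lemma pairFun_apply_inl (f g : Fin (K + L + 1) → ℕ) (j : Fin (K + L + 1)) :
    pairFun K L f g (Sum.inl j) = f j := rfl

@[simp] lemma pairFun_apply_inr (f g : Fin (K + L + 1) → ℕ) (j : Fin (K + L + 1)) :
    pairFun K L f g (Sum.inr j) = g j := rfl

lemma sum_pairFun (f g : Fin (K + L + 1) → ℕ) :
    (pairFun K L f g).sum (fun _ k => k) = (∑ i, f i) + (∑ i, g i) := by
  rw [sum_eq_sum_univ, Fintype.sum_sum_type]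
  rfl

/-- The exponent of the monomial of `Delta` indexed by the permutation `σ`. -/
def permExp (σ : Perm (Fin (K + L + 1))) : (Fin (K + L + 1) ⊕ Fin (K + L + 1)) →₀ ℕ :=
  pairFun K L (fun j => hookP K L (σ⁻¹ j)) (fun j => hookQ K L (σ⁻¹ j))

lemma sum_permExp (σ : Perm (Fin (K + L + 1))) :
    (permExp K L σ).sum (fun _ k => k)
      = (∑ i, hookP K L i) + (∑ i, hookQ K L i) := by
  rw [permExp, sum_pairFun]
  rw [Equiv.sum_comp σ⁻¹ (hookP K L), Equiv.sum_comp σ⁻¹ (hookQ K L)]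

lemma hook_inj {i i' : Fin (K + L + 1)} (hp : hookP K L i = hookP K L i')
    (hq : hookQ K L i = hookQ K L i') : i = i' := by
  apply Fin.ext
  unfold hookP at hp
  unfold hookQ at hq
  split_ifs at hp hq <;> omega

lemma prod_entry (σ : Perm (Fin (K + L + 1))) :
    (∏ i, (X (Sum.inl (σ i)) ^ hookP K L i * X (Sum.inr (σ i)) ^ hookQ K L i
        : MvPolynomial (Fin (K + L + 1) ⊕ Fin (K + L + 1)) ℚ))
      = monomial (permExp K L σ) 1 := by
  rw [monomial_eq, map_one, one_mul, Finsupp.prod_pow, Fintype.prod_sum_type]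
  rw [Finset.prod_mul_distrib]
  congr 1
  · rw [← Equiv.prod_comp σ
      (fun j => (X (Sum.inl j) : MvPolynomial (Fin (K + L + 1) ⊕ Fin (K + L + 1)) ℚ)
        ^ permExp K L σ (Sum.inl j))]
    apply Finset.prod_congr rfl
    intro i _
    simp [permExp]
  · rw [← Equiv.prod_comp σ
      (fun j => (X (Sum.inr j) : MvPolynomial (Fin (K + L + 1) ⊕ Fin (K + L + 1)) ℚ)
        ^ permExp K L σ (Sum.inr j))]
    apply Finset.prod_congr rfl
    intro i _
    simp [permExp]

lemma Delta_eq : Delta K L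
    = ∑ σ : Perm (Fin (K + L + 1)),
        monomial (permExp K L σ) (((Equiv.Perm.sign σ : ℤ) : ℚ)) := by
  rw [Delta]
  refine (Matrix.det_apply' _).trans ?_
  beta_reduce
  apply Finset.sum_congr rfl
  intro σ _
  rw [prod_entry, ← map_intCast (C : ℚ →+* MvPolynomial (Fin (K + L + 1) ⊕ Fin (K + L + 1)) ℚ),
    C_mul_monomial, mul_one]

/-- The composed operator applied to `Delta`, as an explicit sum of monomials. -/
lemma Dmon_Dmon_Delta (d e : (Fin (K + L + 1) ⊕ Fin (K + L + 1)) →₀ ℕ) :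
    Dmon e (Dmon d (Delta K L))
      = ∑ σ : Perm (Fin (K + L + 1)),
          monomial (permExp K L σ - d - e)
            ((((Equiv.Perm.sign σ : ℤ) : ℚ)
              * ∏ i ∈ d.support, ((permExp K L σ) i).descFactorial (d i))
              * ∏ i ∈ e.support, ((permExp K L σ - d) i).descFactorial (e i)) := by
  rw [Delta_eq, map_sum, map_sum]
  apply Finset.sum_congr rfl
  intro σ _
  rw [Dmon_monomial, Dmon_monomial]

end Aval

namespace Aval

variable {K L : ℕ}

/-- number of `y`-columns strictly to the left of `j`. -/
def yCnt (isY : Fin (K + L) → Bool) (j : Fin (K + L)) : ℕ :=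
  (Finset.univ.filter fun j' => j' < j ∧ isY j' = true).card

def xCnt (isY : Fin (K + L) → Bool) (j : Fin (K + L)) : ℕ :=
  (Finset.univ.filter fun j' => j' < j ∧ isY j' = false).card

lemma colSize_eq (isY : Fin (K + L) → Bool) (j : Fin (K + L)) :
    colSize K L isY j = if isY j then K - yCnt isY j else L - xCnt isY j := by
  rw [colSize, yCnt, xCnt]

lemma yCnt_lt (D : Dessin K L) {j : Fin (K + L)} (hj : D.isY j = true) :
    yCnt D.isY j < K := by
  have hss : (Finset.univ.filter fun j' => j' < j ∧ D.isY j' = true)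
      ⊂ Finset.univ.filter fun i => D.isY i = true := by
    rw [Finset.ssubset_def]
    refine ⟨fun a ha => ?_, fun hsub => ?_⟩
    · simp only [Finset.mem_filter, Finset.mem_univ, true_and] at ha ⊢
      exact ha.2
    · have : j ∈ Finset.univ.filter fun i => D.isY i = true := by simp [hj]
      have := hsub this
      simp only [Finset.mem_filter, Finset.mem_univ, true_and] at this
      exact absurd this.1 (lt_irrefl j)
  have := Finset.card_lt_card hss
  rwa [D.card_isY] at this

lemma xCnt_lt (D : Dessin K L) {j : Fin (K + L)} (hj : D.isY j = false) :
    xCnt D.isY j < L := by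
  have hcard : (Finset.univ.filter fun i => D.isY i = false).card = L := by
    have h1 := Finset.card_filter_add_card_filter_not
      (s := (Finset.univ : Finset (Fin (K + L)))) (p := fun i => D.isY i = true)
    simp only [Finset.card_univ, Fintype.card_fin, D.card_isY] at h1
    have h2 : (Finset.univ.filter fun i => ¬ D.isY i = true)
        = Finset.univ.filter fun i => D.isY i = false := by
      apply Finset.filter_congr
      intro i _
      simp [Bool.not_eq_true]
    rw [h2] at h1
    omega
  have hss : (Finset.univ.filter fun j' => j' < j ∧ D.isY j' = false)
      ⊂ Finset.univ.filter fun i => D.isY i = false := by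
    rw [Finset.ssubset_def]
    refine ⟨fun a ha => ?_, fun hsub => ?_⟩
    · simp only [Finset.mem_filter, Finset.mem_univ, true_and] at ha ⊢
      exact ha.2
    · have : j ∈ Finset.univ.filter fun i => D.isY i = false := by simp [hj]
      have := hsub this
      simp only [Finset.mem_filter, Finset.mem_univ, true_and] at this
      exact absurd this.1 (lt_irrefl j)
  have := Finset.card_lt_card hss
  rwa [hcard] at this

lemma yCnt_strict_mono (isY : Fin (K + L) → Bool) {j j' : Fin (K + L)}
    (hjj : j < j') (hj : isY j = true) : yCnt isY j < yCnt isY j' := by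
  apply Finset.card_lt_card
  rw [Finset.ssubset_def]
  refine ⟨fun a ha => ?_, fun hsub => ?_⟩
  · simp only [Finset.mem_filter, Finset.mem_univ, true_and] at ha ⊢
    exact ⟨lt_trans ha.1 hjj, ha.2⟩
  · have : j ∈ Finset.univ.filter fun j'' => j'' < j' ∧ isY j'' = true := by
      simp [hjj, hj]
    have := hsub this
    simp only [Finset.mem_filter, Finset.mem_univ, true_and] at this
    exact absurd this.1 (lt_irrefl j)

lemma xCnt_strict_mono (isY : Fin (K + L) → Bool) {j j' : Fin (K + L)}
    (hjj : j < j') (hj : isY j = false) : xCnt isY j < xCnt isY j' := by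
  apply Finset.card_lt_card
  rw [Finset.ssubset_def]
  refine ⟨fun a ha => ?_, fun hsub => ?_⟩
  · simp only [Finset.mem_filter, Finset.mem_univ, true_and] at ha ⊢
    exact ⟨lt_trans ha.1 hjj, ha.2⟩
  · have : j ∈ Finset.univ.filter fun j'' => j'' < j' ∧ isY j'' = false := by
      simp [hjj, hj]
    have := hsub this
    simp only [Finset.mem_filter, Finset.mem_univ, true_and] at this
    exact absurd this.1 (lt_irrefl j)

/-- `x`-part of the total (crosses plus blanks) exponent of the dessin. -/
def sizeX (D : Dessin K L) (i : Fin (K + L + 1)) : ℕ :=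
  if h : (i : ℕ) < K + L then
    (if D.isY ⟨i, h⟩ then 0 else colSize K L D.isY ⟨i, h⟩) else 0

def sizeY (D : Dessin K L) (i : Fin (K + L + 1)) : ℕ :=
  if h : (i : ℕ) < K + L then
    (if D.isY ⟨i, h⟩ then colSize K L D.isY ⟨i, h⟩ else 0) else 0

lemma exp_add_blankExp (D : Dessin K L) :
    D.exp + D.blankExp = pairFun K L (sizeX D) (sizeY D) := by
  ext s
  rw [Finsupp.add_apply]
  cases s with
  | inl i =>
    show _ + _ = sizeX D i
    rw [Dessin.exp, Dessin.blankExp, sizeX]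
    by_cases h : (i : ℕ) < K + L
    · simp only [Finsupp.coe_equivFunOnFinite_symm, Sum.elim_inl, dif_pos h]
      by_cases hy : D.isY ⟨i, h⟩
      · simp [hy]
      · simp only [hy, if_false, Bool.false_eq_true]
        have := D.cross_le ⟨i, h⟩
        omega
    · simp [h]
  | inr i =>
    show _ + _ = sizeY D i
    rw [Dessin.exp, Dessin.blankExp, sizeY]
    by_cases h : (i : ℕ) < K + L
    · simp only [Finsupp.coe_equivFunOnFinite_symm, Sum.elim_inr, dif_pos h]
      by_cases hy : D.isY ⟨i, h⟩
      · simp only [hy, if_true]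
        have := D.cross_le ⟨i, h⟩
        omega
      · simp [hy]
    · simp [h]

/-- The inverse of the unique permutation matching the biexponents with the
column sizes of the dessin. -/
def tau (D : Dessin K L) (j : Fin (K + L + 1)) : Fin (K + L + 1) :=
  if h : (j : ℕ) < K + L then
    (if D.isY ⟨j, h⟩ then ⟨K - yCnt D.isY ⟨j, h⟩, by omega⟩
     else ⟨K + (L - xCnt D.isY ⟨j, h⟩), by omega⟩)
  else ⟨0, by omega⟩

lemma hookP_tau (D : Dessin K L) (j : Fin (K + L + 1)) :
    hookP K L (tau D j) = sizeX D j := by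
  rw [tau, sizeX]
  by_cases h : (j : ℕ) < K + L
  · rw [dif_pos h, dif_pos h]
    by_cases hy : D.isY ⟨j, h⟩
    · rw [if_pos hy, if_pos hy, hookP]
      simp only []
      rw [if_pos (by omega)]
    · rw [if_neg hy, if_neg hy, hookP]
      have hx := xCnt_lt D (Bool.not_eq_true _ ▸ hy : D.isY ⟨j, h⟩ = false)
      simp only []
      rw [if_neg (by omega), colSize_eq, if_neg hy]
      omega
  · rw [dif_neg h, dif_neg h, hookP]
    simp

lemma hookQ_tau (D : Dessin K L) (j : Fin (K + L + 1)) :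
    hookQ K L (tau D j) = sizeY D j := by
  rw [tau, sizeY]
  by_cases h : (j : ℕ) < K + L
  · rw [dif_pos h, dif_pos h]
    by_cases hy : D.isY ⟨j, h⟩
    · rw [if_pos hy, if_pos hy, hookQ]
      simp only []
      rw [if_pos (by omega), colSize_eq, if_pos hy]
    · rw [if_neg hy, if_neg hy, hookQ]
      have hx := xCnt_lt D (Bool.not_eq_true _ ▸ hy : D.isY ⟨j, h⟩ = false)
      simp only []
      rw [if_neg (by omega)]
  · rw [dif_neg h, dif_neg h, hookQ]
    simp

lemma tau_injective (D : Dessin K L) : Function.Injective (tau D) := by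
  intro j j' heq
  rw [tau, tau] at heq
  by_cases h : (j : ℕ) < K + L <;> by_cases h' : (j' : ℕ) < K + L
  · rw [dif_pos h, dif_pos h'] at heq
    have hyltK : ∀ (a : Fin (K + L)), D.isY a = true → yCnt D.isY a < K :=
      fun a ha => yCnt_lt D ha
    have hxltL : ∀ (a : Fin (K + L)), D.isY a = false → xCnt D.isY a < L :=
      fun a ha => xCnt_lt D ha
    by_cases hy : D.isY ⟨j, h⟩ <;> by_cases hy' : D.isY ⟨j', h'⟩
    · rw [if_pos hy, if_pos hy'] at heq
      have hv : K - yCnt D.isY ⟨j, h⟩ = K - yCnt D.isY ⟨j', h'⟩ := Fin.mk.inj_iff.mp heq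
      have hc1 := hyltK _ hy
      have hc2 := hyltK _ hy'
      have hcc : yCnt D.isY ⟨j, h⟩ = yCnt D.isY ⟨j', h'⟩ := by omega
      apply Fin.ext
      by_contra hne
      rcases Nat.lt_or_ge (j : ℕ) (j' : ℕ) with hlt | hge
      · exact absurd hcc (ne_of_lt (yCnt_strict_mono D.isY (by exact hlt) hy))
      · have hlt' : (j' : ℕ) < (j : ℕ) := by omega
        exact absurd hcc.symm (ne_of_lt (yCnt_strict_mono D.isY (by exact hlt') hy'))
    · rw [if_pos hy, if_neg hy'] at heq
      have hv := Fin.mk.inj_iff.mp heq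
      have hc1 := hyltK _ hy
      have hc2 := hxltL _ (by simpa using hy')
      omega
    · rw [if_neg hy, if_pos hy'] at heq
      have hv := Fin.mk.inj_iff.mp heq
      have hc1 := hxltL _ (by simpa using hy)
      have hc2 := hyltK _ hy'
      omega
    · rw [if_neg hy, if_neg hy'] at heq
      have hv : K + (L - xCnt D.isY ⟨j, h⟩) = K + (L - xCnt D.isY ⟨j', h'⟩) :=
        Fin.mk.inj_iff.mp heq
      have hc1 := hxltL _ (by simpa using hy)
      have hc2 := hxltL _ (by simpa using hy')
      have hcc : xCnt D.isY ⟨j, h⟩ = xCnt D.isY ⟨j', h'⟩ := by omega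
      apply Fin.ext
      by_contra hne
      rcases Nat.lt_or_ge (j : ℕ) (j' : ℕ) with hlt | hge
      · exact absurd hcc (ne_of_lt (xCnt_strict_mono D.isY (by exact hlt) (by simpa using hy)))
      · have hlt' : (j' : ℕ) < (j : ℕ) := by omega
        exact absurd hcc.symm
          (ne_of_lt (xCnt_strict_mono D.isY (by exact hlt') (by simpa using hy')))
  · rw [dif_pos h, dif_neg h'] at heq
    by_cases hy : D.isY ⟨j, h⟩
    · rw [if_pos hy] at heq
      have hv := Fin.mk.inj_iff.mp heq
      have := yCnt_lt D hy
      omega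
    · rw [if_neg hy] at heq
      have hv := Fin.mk.inj_iff.mp heq
      have := xCnt_lt D (by simpa using hy)
      omega
  · rw [dif_neg h, dif_pos h'] at heq
    by_cases hy : D.isY ⟨j', h'⟩
    · rw [if_pos hy] at heq
      have hv := Fin.mk.inj_iff.mp heq
      have := yCnt_lt D hy
      omega
    · rw [if_neg hy] at heq
      have hv := Fin.mk.inj_iff.mp heq
      have := xCnt_lt D (by simpa using hy)
      omega
  · apply Fin.ext
    omega

/-- the permutation `τ` as an `Equiv`. -/
def tauEquiv (D : Dessin K L) : Equiv.Perm (Fin (K + L + 1)) :=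
  Equiv.ofBijective (tau D) ((Finite.injective_iff_bijective).mp (tau_injective D))

lemma tauEquiv_apply (D : Dessin K L) (j : Fin (K + L + 1)) :
    tauEquiv D j = tau D j := rfl

lemma permExp_tauEquiv_symm (D : Dessin K L) :
    permExp K L ((tauEquiv D)⁻¹) = pairFun K L (sizeX D) (sizeY D) := by
  ext s
  cases s with
  | inl j =>
    show hookP K L (((tauEquiv D)⁻¹)⁻¹ j) = sizeX D j
    rw [inv_inv]
    exact hookP_tau D j
  | inr j =>
    show hookQ K L (((tauEquiv D)⁻¹)⁻¹ j) = sizeY D j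
    rw [inv_inv]
    exact hookQ_tau D j

lemma permExp_eq_iff (D : Dessin K L) (σ : Equiv.Perm (Fin (K + L + 1)))
    (hσ : permExp K L σ = pairFun K L (sizeX D) (sizeY D)) : σ = (tauEquiv D)⁻¹ := by
  have hfun : ∀ j, σ⁻¹ j = tau D j := by
    intro j
    apply hook_inj K L
    · have h1 : permExp K L σ (Sum.inl j) = pairFun K L (sizeX D) (sizeY D) (Sum.inl j) := by
        rw [hσ]
      have h2 := hookP_tau D j
      simpa [permExp] using h1.trans h2.symm
    · have h1 : permExp K L σ (Sum.inr j) = pairFun K L (sizeX D) (sizeY D) (Sum.inr j) := by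
        rw [hσ]
      have h2 := hookQ_tau D j
      simpa [permExp] using h1.trans h2.symm
  have : σ⁻¹ = tauEquiv D := Equiv.ext fun j => hfun j
  rw [← inv_inv σ, this]

lemma sum_sizeExp (D : Dessin K L) :
    (pairFun K L (sizeX D) (sizeY D)).sum (fun _ k => k)
      = (∑ i, hookP K L i) + (∑ i, hookQ K L i) := by
  rw [← permExp_tauEquiv_symm D, sum_permExp]

/-- the nonzero sign as a rational number -/
lemma sign_ne_zero (σ : Equiv.Perm (Fin (K + L + 1))) :
    ((Equiv.Perm.sign σ : ℤ) : ℚ) ≠ 0 := by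
  have : ((Equiv.Perm.sign σ : ℤ)) ≠ 0 := Units.ne_zero _
  exact_mod_cast this

/-- Any nonzero summand of `Dmon_Dmon_Delta` forces `d + e ≤ permExp σ`. -/
lemma le_permExp_of_coeff_ne_zero {d e : (Fin (K + L + 1) ⊕ Fin (K + L + 1)) →₀ ℕ}
    {σ : Equiv.Perm (Fin (K + L + 1))}
    (hc : ((((Equiv.Perm.sign σ : ℤ) : ℚ)
        * ∏ i ∈ d.support, ((permExp K L σ) i).descFactorial (d i))
        * ∏ i ∈ e.support, ((permExp K L σ - d) i).descFactorial (e i)) ≠ 0) :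
    d + e ≤ permExp K L σ := by
  have h1 : (∏ i ∈ d.support, ((permExp K L σ) i).descFactorial (d i)) ≠ 0 := by
    intro h0
    apply hc
    rw [h0]
    push_cast
    ring
  have h2 : (∏ i ∈ e.support, ((permExp K L σ - d) i).descFactorial (e i)) ≠ 0 := by
    intro h0
    apply hc
    rw [h0]
    push_cast
    ring
  exact add_le_of_le_tsub (le_of_prodDesc_ne_zero h1) (le_of_prodDesc_ne_zero h2)

/-- Claim B: if the operator produces a nonzero constant term, the result is constant. -/
lemma eq_C_of_constantCoeff_ne_zero (d e : (Fin (K + L + 1) ⊕ Fin (K + L + 1)) →₀ ℕ)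
    (h : constantCoeff (Dmon e (Dmon d (Delta K L))) ≠ 0) :
    Dmon e (Dmon d (Delta K L)) = C (constantCoeff (Dmon e (Dmon d (Delta K L)))) := by
  have hQ := Dmon_Dmon_Delta K L d e
  -- there exists a permutation whose monomial has exponent zero and nonzero coefficient
  have hex : ∃ σ : Equiv.Perm (Fin (K + L + 1)), permExp K L σ = d + e := by
    by_contra hno
    push_neg at hno
    apply h
    rw [hQ, map_sum]
    apply Finset.sum_eq_zero
    intro σ _
    rw [constantCoeff_monomial]
    split_ifs with h0
    · by_contra hc
      have hle := le_permExp_of_coeff_ne_zero (K := K) (L := L) hc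
      have : permExp K L σ = d + e := by
        have h0' : permExp K L σ - (d + e) = 0 := by rw [← tsub_tsub, h0]
        exact le_antisymm (tsub_eq_zero_iff_le.mp h0') hle
      exact hno σ this
    · rfl
  obtain ⟨σ₁, hσ₁⟩ := hex
  have hdeg : (d + e).sum (fun _ k => k) = (∑ i, hookP K L i) + (∑ i, hookQ K L i) := by
    rw [← hσ₁, sum_permExp]
  -- every summand is a constant
  have hterm : ∀ σ : Equiv.Perm (Fin (K + L + 1)),
      (monomial (permExp K L σ - d - e)
            ((((Equiv.Perm.sign σ : ℤ) : ℚ)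
              * ∏ i ∈ d.support, ((permExp K L σ) i).descFactorial (d i))
              * ∏ i ∈ e.support, ((permExp K L σ - d) i).descFactorial (e i))
          : MvPolynomial (Fin (K + L + 1) ⊕ Fin (K + L + 1)) ℚ)
        = C (constantCoeff (monomial (permExp K L σ - d - e)
            ((((Equiv.Perm.sign σ : ℤ) : ℚ)
              * ∏ i ∈ d.support, ((permExp K L σ) i).descFactorial (d i))
              * ∏ i ∈ e.support, ((permExp K L σ - d) i).descFactorial (e i)))) := by
    intro σ
    by_cases hc : ((((Equiv.Perm.sign σ : ℤ) : ℚ)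
        * ∏ i ∈ d.support, ((permExp K L σ) i).descFactorial (d i))
        * ∏ i ∈ e.support, ((permExp K L σ - d) i).descFactorial (e i)) = 0
    · rw [hc]
      simp
    · have hle := le_permExp_of_coeff_ne_zero (K := K) (L := L) hc
      have heq2 : permExp K L σ = d + e := by
        apply eq_of_le_of_sum_eq hle
        rw [sum_permExp, hdeg]
      have hzero : permExp K L σ - d - e = 0 := by
        rw [tsub_tsub, heq2, tsub_self]
      rw [hzero, ← C_apply, constantCoeff_C]
  have h2 : constantCoeff (Dmon e (Dmon d (Delta K L)))
      = ∑ σ : Equiv.Perm (Fin (K + L + 1)),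
          constantCoeff (monomial (permExp K L σ - d - e)
            ((((Equiv.Perm.sign σ : ℤ) : ℚ)
              * ∏ i ∈ d.support, ((permExp K L σ) i).descFactorial (d i))
              * ∏ i ∈ e.support, ((permExp K L σ - d) i).descFactorial (e i))) := by
    rw [hQ, map_sum]
  rw [h2, map_sum, hQ]
  exact Finset.sum_congr rfl fun σ _ => hterm σ

/-- Claim A: the full derivative of `Delta` by all cells has nonzero constant term. -/
lemma diag_constantCoeff_ne_zero (D : Dessin K L) :
    constantCoeff (Dmon D.blankExp (Dmon D.exp (Delta K L))) ≠ 0 := by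
  set d := D.exp with hd
  set e := D.blankExp with he
  have hde : d + e = pairFun K L (sizeX D) (sizeY D) := exp_add_blankExp D
  set σ₀ := (tauEquiv D)⁻¹ with hσ₀
  have hσ₀exp : permExp K L σ₀ = d + e := by rw [hσ₀, permExp_tauEquiv_symm, hde]
  rw [Dmon_Dmon_Delta, map_sum]
  rw [Finset.sum_eq_single σ₀]
  · -- the single term is nonzero
    rw [constantCoeff_monomial]
    have h0 : permExp K L σ₀ - d - e = 0 := by rw [hσ₀exp, tsub_tsub, tsub_self]
    rw [if_pos h0]
    apply mul_ne_zero (mul_ne_zero (sign_ne_zero σ₀) ?_) ?_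
    · rw [Ne, Nat.cast_eq_zero]
      apply prodDesc_ne_zero_of_le
      rw [hσ₀exp]
      exact le_add_right le_rfl
    · rw [Ne, Nat.cast_eq_zero]
      apply prodDesc_ne_zero_of_le
      rw [hσ₀exp, add_tsub_cancel_left]
  · intro σ _ hne
    rw [constantCoeff_monomial]
    split_ifs with h0
    · by_contra hc
      have hle := le_permExp_of_coeff_ne_zero (K := K) (L := L) hc
      have heq2 : permExp K L σ = d + e := by
        apply eq_of_le_of_sum_eq hle
        rw [sum_permExp, ← hσ₀exp, sum_permExp]
      exact hne (hσ₀ ▸ permExp_eq_iff D σ (heq2.trans hde))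
    · rfl
  · intro habs
    exact absurd (Finset.mem_univ σ₀) habs

instance : Finite (Dessin K L) := by
  have hinj : Function.Injective
      (fun D : Dessin K L => ((D.isY, D.cross) : (Fin (K + L) → Bool) × (Fin (K + L) → ℕ))) := by
    intro D D' hDD
    obtain ⟨h1, h2⟩ := Prod.mk_inj.mp hDD
    cases D; cases D'
    simp only at h1 h2
    subst h1; subst h2
    rfl
  have hbound : ∀ D : Dessin K L, ∀ i, D.cross i < K + L + 1 := by
    intro D i
    have := D.cross_le i
    rw [colSize] at this
    split_ifs at this <;> omega
  let f : Dessin K L → (Fin (K + L) → Bool) × (Fin (K + L) → Fin (K + L + 1)) :=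
    fun D => (D.isY, fun i => ⟨D.cross i, hbound D i⟩)
  apply Finite.of_injective f
  intro D D' hDD
  apply hinj
  obtain ⟨h1, h2⟩ := Prod.mk_inj.mp hDD
  refine Prod.ext h1 ?_
  funext i
  exact congrArg Fin.val (congrFun h2 i)

end Aval

open Aval in
/-- Lemma 1: if no dessin is its own descendant (descendance being the transitive
closure of the son relation), then the family `{∂_{S(D)} Δ_μ : D ∈ 𝒟}` is linearly
independent over `ℚ`. -/
theorem stmt13 (K L : ℕ)
    (h : ∀ D : Dessin K L, ¬ Relation.TransGen (Son K L) D D) :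
    LinearIndependent ℚ (fun D : Dessin K L => Dmon D.exp (Delta K L)) := by
  classical
  rw [linearIndependent_iff']
  intro s g hsum
  -- well-foundedness of the reversed descendance relation
  letI : IsTrans (Dessin K L) (fun a b => Relation.TransGen (Son K L) b a) :=
    ⟨fun a b c hab hbc => Relation.TransGen.trans hbc hab⟩
  letI : IsIrrefl (Dessin K L) (fun a b => Relation.TransGen (Son K L) b a) := ⟨h⟩
  have wf : WellFounded (fun a b : Dessin K L => Relation.TransGen (Son K L) b a) :=
    Finite.wellFounded_of_trans_of_irrefl _
  intro D hD
  induction D using wf.induction with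
  | _ D IH =>
  -- apply `∂_{T(D)}` and take the constant coefficient
  have h1 : ∑ D₁ ∈ s, g D₁ • Dmon D.blankExp (Dmon D₁.exp (Delta K L)) = 0 := by
    have := congrArg (Dmon D.blankExp) hsum
    simpa [map_sum, map_smul] using this
  have h2 : ∑ D₁ ∈ s, g D₁ * constantCoeff (Dmon D.blankExp (Dmon D₁.exp (Delta K L))) = 0 := by
    have := congrArg constantCoeff h1
    simpa [map_sum, smul_eq_C_mul, map_mul] using this
  have h3 : ∑ D₁ ∈ s, g D₁ * constantCoeff (Dmon D.blankExp (Dmon D₁.exp (Delta K L)))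
      = g D * constantCoeff (Dmon D.blankExp (Dmon D.exp (Delta K L))) := by
    apply Finset.sum_eq_single D
    · intro D₁ hD₁ hne
      by_cases hc : constantCoeff (Dmon D.blankExp (Dmon D₁.exp (Delta K L))) = 0
      · rw [hc, mul_zero]
      · have hson : Son K L D D₁ :=
          ⟨hne, _, hc, eq_C_of_constantCoeff_ne_zero D₁.exp D.blankExp hc⟩
        rw [IH D₁ (Relation.TransGen.single hson) hD₁, zero_mul]
    · intro habs
      exact absurd hD habs
  rw [h3] at h2
  exact (mul_eq_zero.mp h2).resolve_right (diag_constantCoeff_ne_zero D)
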